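/- Let q = 3^d with d even and b ∈ F_q with Tr(b) ≠ 0. Then the elliptic curve E: y^2 = x^3 - x + b over F_q satisfies #E(F_q) = q + 1 + (-1)^(d/2)·3^(d/2). -/

import Mathlib

open Finset Polynomial

section FiberLemmas

variable {G F : Type*} [AddCommGroup G] [AddCommGroup F] [Fintype G] [DecidableEq G]
  [DecidableEq F]

lemma fiber_card_eq_ker_card (φ : G →+ F) (x₀ : G) :
    #(univ.filter fun x => φ x = φ x₀) = #(univ.filter fun x => φ x = 0) := by
  apply Finset.card_nbij' (i := fun x => x - x₀) (j := fun x => x + x₀)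
  · intro x hx
    simp only [mem_coe, mem_filter, mem_univ, true_and] at hx ⊢
    rw [map_sub, hx, sub_self]
  · intro x hx
    simp only [mem_coe, mem_filter, mem_univ, true_and] at hx ⊢
    rw [map_add, hx, zero_add]
  · intro x _; simp
  · intro x _; simp

lemma ker_card_mul_image_card (φ : G →+ F) :
    #(univ.filter fun x => φ x = 0) * #(univ.image φ) = Fintype.card G := by
  have h := Finset.card_eq_sum_card_fiberwise
    (f := φ) (s := (univ : Finset G)) (t := univ.image φ)
    (fun x _ => mem_image_of_mem _ (mem_univ x))
  rw [Finset.card_univ] at h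
  rw [h, Finset.sum_congr rfl (fun c hc => ?_), Finset.sum_const, smul_eq_mul, mul_comm]
  obtain ⟨x₀, _, rfl⟩ := Finset.mem_image.mp hc
  exact fiber_card_eq_ker_card φ x₀

lemma sum_comp_hom (φ : G →+ F) (f : F → ℤ) :
    ∑ x : G, f (φ x) =
      (#(univ.filter fun x => φ x = 0) : ℤ) * ∑ c ∈ univ.image φ, f c := by
  rw [Finset.sum_comp f φ, Finset.mul_sum]
  refine Finset.sum_congr rfl fun c hc => ?_
  obtain ⟨x₀, _, rfl⟩ := Finset.mem_image.mp hc
  rw [fiber_card_eq_ker_card φ x₀]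
  push_cast
  ring

end FiberLemmas

section RootBound

variable {F : Type*} [Field F] [Fintype F] [DecidableEq F]

lemma card_eval_zero_le {p : F[X]} (hp : p ≠ 0) :
    #(univ.filter fun x => p.eval x = 0) ≤ p.natDegree := by
  have hsub : (univ.filter fun x => p.eval x = 0) ⊆ p.roots.toFinset := by
    intro x hx
    simp only [mem_filter, mem_univ, true_and] at hx
    rw [Multiset.mem_toFinset, Polynomial.mem_roots hp]
    exact hx
  calc #(univ.filter fun x => p.eval x = 0) ≤ p.roots.toFinset.card := Finset.card_le_card hsub
    _ ≤ Multiset.card p.roots := Multiset.toFinset_card_le _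
    _ ≤ p.natDegree := Polynomial.card_roots' p

/-- bound on the number of zeros of x ↦ ∑_{i<n} x^(3^i) -/
lemma tau_zeros_le (n : ℕ) (hn : n ≠ 0) :
    #(univ.filter fun x : F => ∑ i ∈ range n, x ^ 3 ^ i = 0) ≤ 3 ^ (n - 1) := by
  set p : F[X] := ∑ i ∈ range n, X ^ 3 ^ i with hp
  have heval : ∀ x : F, p.eval x = ∑ i ∈ range n, x ^ 3 ^ i := by
    intro x
    rw [hp, Polynomial.eval_finset_sum]
    simp
  have hpne : p ≠ 0 := by
    intro h
    have hc : p.coeff (3 ^ (n - 1)) = 1 := by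
      rw [hp, Polynomial.finset_sum_coeff]
      rw [Finset.sum_eq_single (n - 1)]
      · simp
      · intro i hi hne
        rw [Polynomial.coeff_X_pow, if_neg]
        exact fun hh => hne (Nat.pow_right_injective (by norm_num) hh.symm)
      · intro h; exact absurd (Finset.mem_range.mpr (by omega)) h
    
    rw [h] at hc
    simp at hc
  have hdeg : p.natDegree ≤ 3 ^ (n - 1) := by
    apply Polynomial.natDegree_sum_le_of_forall_le
    intro i hi
    rw [Polynomial.natDegree_X_pow]
    have := Finset.mem_range.mp hi
    exact Nat.pow_le_pow_right (by norm_num) (by omega : i ≤ n - 1)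
  calc #(univ.filter fun x : F => ∑ i ∈ range n, x ^ 3 ^ i = 0)
      = #(univ.filter fun x : F => p.eval x = 0) := by
        congr 1; apply Finset.filter_congr; intro x _; rw [heval]
    _ ≤ p.natDegree := card_eval_zero_le hpne
    _ ≤ 3 ^ (n - 1) := hdeg

lemma card_pow_eq_self_le (r : ℕ) (hr : 1 < r) :
    #(univ.filter fun x : F => x ^ r = x) ≤ r := by
  set p : F[X] := X ^ r - X with hp
  have hpne : p ≠ 0 := by
    intro h
    have hc : p.coeff r = 1 := by
      rw [hp]; simp [Polynomial.coeff_X_pow, Polynomial.coeff_X, hr.ne]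
    rw [h] at hc; simp at hc
  have hdeg : p.natDegree ≤ r := by
    apply le_trans (Polynomial.natDegree_sub_le _ _)
    simp [Polynomial.natDegree_X_pow]; omega
  calc #(univ.filter fun x : F => x ^ r = x)
      = #(univ.filter fun x : F => p.eval x = 0) := by
        congr 1; apply Finset.filter_congr; intro x _; simp [hp, sub_eq_zero]
    _ ≤ p.natDegree := card_eval_zero_le hpne
    _ ≤ r := hdeg

lemma card_pow_eq_neg_self_le (r : ℕ) (hr : 1 < r) :
    #(univ.filter fun x : F => x ^ r = -x) ≤ r := by
  set p : F[X] := X ^ r + X with hp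
  have hpne : p ≠ 0 := by
    intro h
    have hc : p.coeff r = 1 := by
      rw [hp]; simp [Polynomial.coeff_X_pow, Polynomial.coeff_X, hr.ne]
    rw [h] at hc; simp at hc
  have hdeg : p.natDegree ≤ r := by
    apply le_trans (Polynomial.natDegree_add_le _ _)
    simp [Polynomial.natDegree_X_pow]; omega
  calc #(univ.filter fun x : F => x ^ r = -x)
      = #(univ.filter fun x : F => p.eval x = 0) := by
        congr 1; apply Finset.filter_congr; intro x _
        simp [hp]
        constructor
        · intro h; rw [h]; ring
        · intro h; linear_combination h
    _ ≤ p.natDegree := card_eval_zero_le hpne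
    _ ≤ r := hdeg

end RootBound

open Finset

variable {K : Type*} [Field K] [Fintype K] [DecidableEq K]

lemma sum_sq_expand (hK : ringChar K ≠ 2) (f : K → ℤ) :
    ∑ t : K, f (t ^ 2) = ∑ w : K, (quadraticChar K w + 1) * f w := by
  have h := Finset.sum_fiberwise_of_maps_to (s := (univ : Finset K)) (t := (univ : Finset K))
      (g := fun t => t ^ 2) (fun i _ => mem_univ _) (fun t => f (t ^ 2))
  rw [← h]
  refine Finset.sum_congr rfl fun w _ => ?_
  have : ∀ t ∈ univ.filter (fun t : K => t ^ 2 = w), f (t ^ 2) = f w := by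
    intro t ht
    rw [(mem_filter.mp ht).2]
  rw [Finset.sum_congr rfl this, Finset.sum_const, ← quadraticChar_card_sqrts hK w]
  have : ({x : K | x ^ 2 = w}.toFinset) = univ.filter (fun t : K => t ^ 2 = w) := by
    ext x; simp
  rw [this]; ring

lemma sum_quad_shift (hK : ringChar K ≠ 2) {a c : K} (ha : a ≠ 0) (hc : c ≠ 0) :
    ∑ t : K, (quadraticChar K (a * t ^ 2 + c) : ℤ) = -(quadraticChar K a) := by
  rw [sum_sq_expand hK (fun w => (quadraticChar K (a * w + c) : ℤ))]
  have split : ∀ w : K, ((quadraticChar K w : ℤ) + 1) * quadraticChar K (a * w + c)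
      = (quadraticChar K (a * w ^ 2 + c * w) : ℤ) + quadraticChar K (a * w + c) := by
    intro w
    have hm : (quadraticChar K w) * quadraticChar K (a * w + c)
        = quadraticChar K (a * w ^ 2 + c * w) := by
      rw [← map_mul]
      congr 1
      ring
    rw [add_mul, one_mul, hm]
  rw [Finset.sum_congr rfl (fun w _ => split w), Finset.sum_add_distrib]
  have h2 : ∑ w : K, (quadraticChar K (a * w + c) : ℤ) = 0 := by
    have e : ∑ w : K, (quadraticChar K (a * w + c) : ℤ) = ∑ v : K, (quadraticChar K v : ℤ) := by
      apply Finset.sum_nbij' (i := fun w => a * w + c) (j := fun v => a⁻¹ * (v - c))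
      · intro x _; exact mem_univ _
      · intro x _; exact mem_univ _
      · intro x _; field_simp; ring
      · intro x _; field_simp; ring
      · intro x _; rfl
    rw [e]
    exact quadraticChar_sum_zero hK
  rw [h2, add_zero]
  -- first sum: split off w = 0
  have key : ∀ w : K, w ≠ 0 → (quadraticChar K (a * w ^ 2 + c * w) : ℤ)
      = quadraticChar K (a + c * w⁻¹) := by
    intro w hw
    have : a * w ^ 2 + c * w = w ^ 2 * (a + c * w⁻¹) := by field_simp
    rw [this, map_mul, quadraticChar_sq_one' hw, one_mul]
  have h0 : (quadraticChar K (a * 0 ^ 2 + c * 0) : ℤ) = 0 := by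
    simp [quadraticChar_zero]
  rw [← Finset.sum_erase_add _ _ (mem_univ (0 : K)), h0, add_zero]
  rw [Finset.sum_congr rfl (fun w hw => key w (Finset.ne_of_mem_erase hw))]
  have e2 : ∑ w ∈ univ.erase (0 : K), (quadraticChar K (a + c * w⁻¹) : ℤ)
      = ∑ v ∈ univ.erase (0 : K), (quadraticChar K (a + v) : ℤ) := by
    apply Finset.sum_nbij' (i := fun w => c * w⁻¹) (j := fun v => c * v⁻¹)
    · intro x hx
      simp only [mem_erase, mem_univ, and_true] at hx ⊢
      exact mul_ne_zero hc (inv_ne_zero hx)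
    · intro x hx
      simp only [mem_erase, mem_univ, and_true] at hx ⊢
      exact mul_ne_zero hc (inv_ne_zero hx)
    · intro x hx
      simp only [mem_erase, mem_univ, and_true] at hx
      field_simp
    · intro x hx
      simp only [mem_erase, mem_univ, and_true] at hx
      field_simp
    · intro x _; rfl
  rw [e2]
  have e3 : ∑ v ∈ univ.erase (0 : K), (quadraticChar K (a + v) : ℤ)
      = (∑ v : K, (quadraticChar K (a + v) : ℤ)) - quadraticChar K a := by
    rw [← Finset.sum_erase_add _ _ (mem_univ (0 : K))]
    simp
  have e4 : ∑ v : K, (quadraticChar K (a + v) : ℤ) = 0 := by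
    have e : ∑ v : K, (quadraticChar K (a + v) : ℤ) = ∑ u : K, (quadraticChar K u : ℤ) := by
      apply Finset.sum_nbij' (i := fun v => a + v) (j := fun u => u - a)
      · intro x _; exact mem_univ _
      · intro x _; exact mem_univ _
      · intro x _; ring
      · intro x _; ring
      · intro x _; rfl
    rw [e]
    exact quadraticChar_sum_zero hK
  rw [e3, e4, zero_sub]

open Finset

def subK (F : Type*) [Field F] (r : ℕ) (hr : Odd r) (hr1 : r ≠ 0)
    (hadd : ∀ x y : F, (x + y) ^ r = x ^ r + y ^ r) : Subfield F where
  carrier := {x | x ^ r = x}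
  mul_mem' := by
    intro a b ha hb
    simp only [Set.mem_setOf_eq] at *
    rw [mul_pow, ha, hb]
  one_mem' := by simp
  add_mem' := by
    intro a b ha hb
    simp only [Set.mem_setOf_eq] at *
    rw [hadd, ha, hb]
  zero_mem' := by simp [zero_pow hr1]
  neg_mem' := by
    intro a ha
    simp only [Set.mem_setOf_eq] at *
    rw [hr.neg_pow, ha]
  inv_mem' := by
    intro a ha
    simp only [Set.mem_setOf_eq] at *
    rw [inv_pow, ha]

lemma subK_mem (F : Type*) [Field F] (r : ℕ) (hr : Odd r) (hr1 : r ≠ 0)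
    (hadd : ∀ x y : F, (x + y) ^ r = x ^ r + y ^ r) (x : F) :
    x ∈ subK F r hr hr1 hadd ↔ x ^ r = x := Iff.rfl

section Bridge

variable {F : Type*} [Field F] [Fintype F] [DecidableEq F]

lemma bridge (K : Subfield F) [Fintype K] [DecidableEq K]
    (hFc : ringChar F ≠ 2) (hKc : ringChar K ≠ 2) (r : ℕ) (hr : 1 < r)
    (hcard : Fintype.card F = r ^ 2) (hrodd : Odd r)
    (hKcard : Fintype.card K = r)
    (u : F) (hu : u ≠ 0) (n : K) (hn : (n : F) = u ^ (r + 1)) :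
    quadraticChar F u = quadraticChar K n := by
  have hnz : n ≠ 0 := by
    intro h
    rw [h] at hn
    exact pow_ne_zero (r + 1) hu (by simpa using hn.symm)
  rw [quadraticChar_eq_pow_of_char_ne_two hFc hu, quadraticChar_eq_pow_of_char_ne_two hKc hnz,
    hcard, hKcard]
  have harith : r ^ 2 / 2 = (r + 1) * (r / 2) := by
    obtain ⟨j, rfl⟩ := hrodd
    have h1 : (2 * j + 1) / 2 = j := by omega
    have h2 : (2 * j + 1) ^ 2 = 2 * (2 * (j * j) + 2 * j) + 1 := by ring
    have h3 : (2 * j + 1 + 1) * ((2 * j + 1) / 2) = 2 * (j * j) + 2 * j := by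
      rw [h1]; ring
    rw [h2, h3]
    omega
  have hiff : u ^ (r ^ 2 / 2) = 1 ↔ n ^ (r / 2) = 1 := by
    rw [harith, mul_comm, pow_mul]
    have hcoe : ((n ^ (r / 2) : K) : F) = (u ^ (r + 1)) ^ (r / 2) := by
      push_cast [hn]
      ring
    constructor
    · intro h
      have : ((n ^ (r / 2) : K) : F) = ((1 : K) : F) := by
        rw [hcoe]; rw [← pow_mul, mul_comm, pow_mul] at h; simpa using h
      exact Subtype.coe_injective this
    · intro h
      have := congrArg (fun x : K => (x : F)) h
      simp only [hcoe] at this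
      rw [← pow_mul, mul_comm, pow_mul]
      simpa using this
  rw [if_congr hiff rfl rfl]

end Bridge

lemma chi4_three_pow (m : ℕ) : (ZMod.χ₄ ((3 ^ m : ℕ) : ZMod 4) : ℤ) = (-1) ^ m := by
  induction m with
  | zero => simp
  | succ n ih =>
      have hc : ((3 ^ (n + 1) : ℕ) : ZMod 4) = ((3 ^ n : ℕ) : ZMod 4) * ((3 : ℕ) : ZMod 4) := by
        push_cast
        ring
      rw [hc, map_mul, ih]
      have : (ZMod.χ₄ ((3 : ℕ) : ZMod 4) : ℤ) = -1 := by decide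
      rw [this]
      ring
theorem point_count_typeI_trace_nonzero_even
    (d : ℕ) (hd : Even d) (hd0 : d ≠ 0) (F : Type) [Field F] [Fintype F]
    [Algebra (ZMod 3) F] (hF : Fintype.card F = 3 ^ d) (b : F)
    (hb : Algebra.trace (ZMod 3) F b ≠ 0) :
    (Nat.card {p : F × F // p.2 ^ 2 = p.1 ^ 3 - p.1 + b} : ℤ) + 1 =
      3 ^ d + 1 + (-1) ^ (d / 2) * 3 ^ (d / 2) := by
  classical
  obtain ⟨m, hm⟩ := hd
  have hm0 : m ≠ 0 := by omega
  haveI : Fact (Nat.Prime 3) := ⟨by norm_num⟩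
  haveI hch : CharP F 3 := charP_of_injective_ringHom (algebraMap (ZMod 3) F).injective 3
  have hring : ringChar F = 3 := by
    rw [ringChar.eq F 3]
  have hF2 : ringChar F ≠ 2 := by rw [hring]; norm_num
  set q : ℕ := 3 ^ d with hq
  set r : ℕ := 3 ^ m with hr
  have hr1 : 1 < r := by
    rw [hr]
    exact Nat.one_lt_pow hm0 (by norm_num)
  have hrodd : Odd r := (by decide : Odd 3).pow
  have hqr : q = r * r := by rw [hq, hr, ← pow_add, hm]
  -- additive maps
  have hadd3 : ∀ x y : F, (x + y) ^ 3 = x ^ 3 + y ^ 3 := fun x y => add_pow_char x y 3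
  have haddr : ∀ x y : F, (x + y) ^ r = x ^ r + y ^ r := fun x y => add_pow_char_pow x y 3 m
  have haddpow : ∀ (k : ℕ) (x y : F), (x + y) ^ 3 ^ k = x ^ 3 ^ k + y ^ 3 ^ k :=
    fun k x y => add_pow_char_pow x y 3 k
  set AS : F →+ F := AddMonoidHom.mk' (fun x => x ^ 3 - x)
    (by intro a c; show (a + c) ^ 3 - (a + c) = (a ^ 3 - a) + (c ^ 3 - c); rw [hadd3]; ring)
    with hAS
  set T : F →+ F := AddMonoidHom.mk' (fun x => x + x ^ r)
    (by intro a c; show (a + c) + (a + c) ^ r = (a + a ^ r) + (c + c ^ r); rw [haddr]; ring)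
    with hT
  set τd : F →+ F := AddMonoidHom.mk' (fun x => ∑ i ∈ Finset.range d, x ^ 3 ^ i)
    (by
      intro a c
      show ∑ i ∈ Finset.range d, (a + c) ^ 3 ^ i
        = (∑ i ∈ Finset.range d, a ^ 3 ^ i) + ∑ i ∈ Finset.range d, c ^ 3 ^ i
      rw [← Finset.sum_add_distrib]
      exact Finset.sum_congr rfl fun i _ => haddpow i a c) with hτd
  set τm : F →+ F := AddMonoidHom.mk' (fun x => ∑ i ∈ Finset.range m, x ^ 3 ^ i)
    (by
      intro a c
      show ∑ i ∈ Finset.range m, (a + c) ^ 3 ^ i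
        = (∑ i ∈ Finset.range m, a ^ 3 ^ i) + ∑ i ∈ Finset.range m, c ^ 3 ^ i
      rw [← Finset.sum_add_distrib]
      exact Finset.sum_congr rfl fun i _ => haddpow i a c) with hτm
  have hASapp : ∀ x : F, AS x = x ^ 3 - x := fun x => rfl
  have hTapp : ∀ x : F, T x = x + x ^ r := fun x => rfl
  have hτdapp : ∀ x : F, τd x = ∑ i ∈ Finset.range d, x ^ 3 ^ i := fun x => rfl
  have hτmapp : ∀ x : F, τm x = ∑ i ∈ Finset.range m, x ^ 3 ^ i := fun x => rfl
  have hpowq : ∀ x : F, x ^ q = x := by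
    intro x
    rw [← hF]
    exact FiniteField.pow_card x
  -- the prime field P = {0, 1, -1}
  have hne11 : (-1 : F) ≠ 1 := Ring.neg_one_ne_one_of_char_ne_two hF2
  have hPfin : Finset.univ.filter (fun x : F => x ^ 3 = x) = {0, 1, -1} := by
    ext x
    simp only [Finset.mem_filter, Finset.mem_univ, true_and, Finset.mem_insert,
      Finset.mem_singleton]
    constructor
    · intro h
      have hfac : x * ((x - 1) * (x + 1)) = 0 := by linear_combination h
      rcases mul_eq_zero.mp hfac with h1 | h2
      · exact Or.inl h1
      · rcases mul_eq_zero.mp h2 with h3 | h4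
        · exact Or.inr (Or.inl (by linear_combination h3))
        · exact Or.inr (Or.inr (by linear_combination h4))
    · rintro (rfl | rfl | rfl) <;> ring
  have hPcard : #(Finset.univ.filter (fun x : F => x ^ 3 = x)) = 3 := by
    rw [hPfin]
    rw [Finset.card_insert_of_notMem (by
      simp only [Finset.mem_insert, Finset.mem_singleton]
      push_neg
      exact ⟨fun h => one_ne_zero h.symm, fun h => (neg_ne_zero.mpr one_ne_zero) h.symm⟩)]
    rw [Finset.card_insert_of_notMem (by
      simp only [Finset.mem_singleton]
      exact fun h => hne11 h.symm)]
    simp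
  have hkerAS : Finset.univ.filter (fun x : F => AS x = 0)
      = Finset.univ.filter (fun x : F => x ^ 3 = x) := by
    apply Finset.filter_congr
    intro x _
    rw [hASapp, sub_eq_zero]
  have hkerAScard : #(Finset.univ.filter (fun x : F => AS x = 0)) = 3 := by
    rw [hkerAS, hPcard]
  have himage3 : #(Finset.univ.image AS) = 3 ^ (d - 1) := by
    have h := ker_card_mul_image_card AS
    rw [hkerAScard, hF, hq] at h
    have h3 : (3 : ℕ) ^ d = 3 * 3 ^ (d - 1) := by
      rw [← pow_succ']
      congr 1
      omega
    rw [h3] at h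
    exact Nat.eq_of_mul_eq_mul_left (by norm_num) h
  -- trace shift
  have hpow3d : ∀ x : F, x ^ 3 ^ d = x := by
    intro x
    have := hpowq x
    rwa [hq] at this
  have hshift : ∀ x : F, τd (x ^ 3) = τd x := by
    intro x
    rw [hτdapp, hτdapp]
    have h1 : ∀ i : ℕ, (x ^ 3) ^ 3 ^ i = x ^ 3 ^ (i + 1) := by
      intro i
      rw [← pow_mul, ← pow_succ']
    have h2 := Finset.sum_range_succ' (fun i => x ^ 3 ^ i) d
    have h3 := Finset.sum_range_succ (fun i => x ^ 3 ^ i) d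
    have h4 : ∑ i ∈ Finset.range d, x ^ 3 ^ (i + 1) + x ^ 3 ^ 0
        = ∑ i ∈ Finset.range d, x ^ 3 ^ i + x ^ 3 ^ d := by
      rw [← h2, ← h3]
    rw [hpow3d, pow_zero, pow_one] at h4
    calc ∑ i ∈ Finset.range d, (x ^ 3) ^ 3 ^ i
        = ∑ i ∈ Finset.range d, x ^ 3 ^ (i + 1) := Finset.sum_congr rfl fun i _ => h1 i
      _ = ∑ i ∈ Finset.range d, x ^ 3 ^ i := by
          have := add_right_cancel h4
          exact this
  have hτdAS : ∀ x : F, τd (AS x) = 0 := by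
    intro x
    rw [hASapp, map_sub, hshift, sub_self]
  have hcube : ∀ x : F, (τd x) ^ 3 = τd x := by
    intro x
    have he : (τd x) ^ 3 = τd (x ^ 3) := by
      rw [hτdapp, hτdapp, sum_pow_char]
      exact Finset.sum_congr rfl fun i _ => by
        rw [← pow_mul, ← pow_mul, mul_comm]
    rw [he, hshift]
  have himAS : Finset.univ.image AS = Finset.univ.filter (fun c : F => τd c = 0) := by
    apply Finset.eq_of_subset_of_card_le
    · intro c hc
      obtain ⟨x, -, rfl⟩ := Finset.mem_image.mp hc
      simp only [Finset.mem_filter, Finset.mem_univ, true_and]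
      exact hτdAS x
    · rw [himage3]
      calc #(Finset.univ.filter (fun c : F => τd c = 0))
          = #(Finset.univ.filter (fun c : F => ∑ i ∈ Finset.range d, c ^ 3 ^ i = 0)) := by
            congr 1
        _ ≤ 3 ^ (d - 1) := tau_zeros_le d hd0
  -- trace of x^3
  have htrace3 : ∀ x : F, Algebra.trace (ZMod 3) F (x ^ 3) = Algebra.trace (ZMod 3) F x := by
    intro x
    have hcomm : ∀ z : ZMod 3,
        frobenius F 3 (algebraMap (ZMod 3) F z) = algebraMap (ZMod 3) F z := by
      intro z
      rw [frobenius_def, ← map_pow, ZMod.pow_card]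
    have hbij : Function.Bijective (frobenius F 3) :=
      (Finite.injective_iff_bijective).mp (frobenius F 3).injective
    let e : F ≃ₐ[ZMod 3] F := AlgEquiv.ofBijective (AlgHom.mk (frobenius F 3) hcomm) hbij
    have he := Algebra.trace_eq_of_algEquiv e x
    have hex : e x = x ^ 3 := by
      show frobenius F 3 x = x ^ 3
      rw [frobenius_def]
    rw [hex] at he
    exact he
  have hτb : τd b ≠ 0 := by
    intro h0
    have hbmem : b ∈ Finset.univ.image AS := by
      rw [himAS]
      simp only [Finset.mem_filter, Finset.mem_univ, true_and]
      exact h0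
    obtain ⟨x, -, hx⟩ := Finset.mem_image.mp hbmem
    apply hb
    rw [← hx, hASapp, map_sub, htrace3, sub_self]
  -- the relative trace T and subfield K
  have hpowrr : ∀ x : F, (x ^ r) ^ r = x := by
    intro x
    rw [← pow_mul, ← hqr]
    exact hpowq x
  have himTK : ∀ x : F, (T x) ^ r = T x := by
    intro x
    rw [hTapp, haddr, hpowrr]
    ring
  set Kfin := Finset.univ.filter (fun x : F => x ^ r = x) with hKfin
  have hKfinle : #Kfin ≤ r := card_pow_eq_self_le r hr1
  have hkerTfin : Finset.univ.filter (fun x : F => T x = 0)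
      = Finset.univ.filter (fun x : F => x ^ r = -x) := by
    apply Finset.filter_congr
    intro x _
    rw [hTapp]
    constructor
    · intro h; linear_combination h
    · intro h; linear_combination h
  have hkerTle : #(Finset.univ.filter (fun x : F => T x = 0)) ≤ r := by
    rw [hkerTfin]; exact card_pow_eq_neg_self_le r hr1
  have hprod : #(Finset.univ.filter (fun x : F => T x = 0)) * #(Finset.univ.image T)
      = r * r := by
    rw [ker_card_mul_image_card T, hF, hqr]
  have himTsub : Finset.univ.image T ⊆ Kfin := by
    intro c hc
    obtain ⟨x, -, rfl⟩ := Finset.mem_image.mp hc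
    simp only [hKfin, Finset.mem_filter, Finset.mem_univ, true_and]
    exact himTK x
  have himTle : #(Finset.univ.image T) ≤ r := le_trans (Finset.card_le_card himTsub) hKfinle
  have hkerTcard : #(Finset.univ.filter (fun x : F => T x = 0)) = r := by
    have h1 : r * r ≤ #(Finset.univ.filter (fun x : F => T x = 0)) * r := by
      calc r * r = #(Finset.univ.filter (fun x : F => T x = 0)) * #(Finset.univ.image T) :=
            hprod.symm
        _ ≤ #(Finset.univ.filter (fun x : F => T x = 0)) * r :=
            Nat.mul_le_mul_left _ himTle
    have h2 : r ≤ #(Finset.univ.filter (fun x : F => T x = 0)) :=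
      Nat.le_of_mul_le_mul_right h1 (by omega)
    omega
  have himTcard : #(Finset.univ.image T) = r := by
    rw [hkerTcard] at hprod
    exact Nat.eq_of_mul_eq_mul_left (by omega) hprod
  have himT : Finset.univ.image T = Kfin := by
    apply Finset.eq_of_subset_of_card_le himTsub
    rw [himTcard]
    exact hKfinle
  have hKfincard : #Kfin = r := by rw [← himT, himTcard]
  -- the element δ
  obtain ⟨δ, hδmem, hδ0⟩ := Finset.exists_mem_ne
    (by rw [hkerTcard]; exact hr1 :
      1 < #(Finset.univ.filter (fun x : F => T x = 0))) 0
  have hδr : δ ^ r = -δ := by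
    rw [hkerTfin] at hδmem
    simpa using (Finset.mem_filter.mp hδmem).2
  -- the subfield K
  set K : Subfield F := subK F r hrodd (by omega) haddr with hK
  letI : Fintype K := Fintype.ofFinite K
  letI : DecidableEq K := Classical.decEq K
  have hmemK : ∀ x : F, x ∈ K ↔ x ^ r = x := fun x => Iff.rfl
  have hcardK : Fintype.card K = r := by
    rw [Fintype.card_of_subtype Kfin (fun x => by
      rw [hKfin, Finset.mem_filter]
      simp [hmemK])]
    exact hKfincard
  haveI hchK : CharP K 3 := by
    constructor
    intro n
    have h1 : ((n : K) : F) = (n : F) := by push_cast; rfl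
    constructor
    · intro h
      have : ((n : K) : F) = 0 := by rw [h]; simp
      rw [h1] at this
      exact (CharP.cast_eq_zero_iff F 3 n).mp this
    · intro h
      have h2 : (n : F) = 0 := (CharP.cast_eq_zero_iff F 3 n).mpr h
      have : ((n : K) : F) = 0 := by rw [h1, h2]
      exact Subtype.coe_injective (by simpa using this)
  have hKc2 : ringChar K ≠ 2 := by
    rw [ringChar.eq K 3]
    norm_num
  -- tower identity
  have htower : ∀ u : F, τd u = τm (T u) := by
    intro u
    rw [hτdapp, hτmapp, hTapp]
    have hsplit : ∑ i ∈ Finset.range d, u ^ 3 ^ i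
        = (∑ i ∈ Finset.range m, u ^ 3 ^ i) + ∑ i ∈ Finset.range m, u ^ 3 ^ (m + i) := by
      rw [hm]
      exact Finset.sum_range_add (fun i => u ^ 3 ^ i) m m
    have hterm : ∀ i : ℕ, (u + u ^ r) ^ 3 ^ i = u ^ 3 ^ i + u ^ 3 ^ (m + i) := by
      intro i
      rw [haddpow i u (u ^ r)]
      congr 1
      rw [pow_add, pow_mul]
    rw [hsplit, Finset.sum_congr rfl (fun i _ => hterm i), Finset.sum_add_distrib]
  -- τm maps K into the prime field
  have hτmP : ∀ v : F, v ^ r = v → (τm v) ^ 3 = τm v := by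
    intro v hv
    have h1 : (τm v) ^ 3 = ∑ i ∈ Finset.range m, v ^ 3 ^ (i + 1) := by
      rw [hτmapp, sum_pow_char]
      exact Finset.sum_congr rfl fun i _ => by rw [← pow_mul, ← pow_succ]
    have h2 := Finset.sum_range_succ' (fun i => v ^ 3 ^ i) m
    have h3 := Finset.sum_range_succ (fun i => v ^ 3 ^ i) m
    have h4 : ∑ i ∈ Finset.range m, v ^ 3 ^ (i + 1) + v ^ 3 ^ 0
        = ∑ i ∈ Finset.range m, v ^ 3 ^ i + v ^ 3 ^ m := by rw [← h2, ← h3]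
    rw [pow_zero, pow_one] at h4
    have h5 : v ^ 3 ^ m = v := hv
    rw [h5] at h4
    rw [h1, hτmapp]
    exact add_right_cancel h4
  -- the homomorphism ρ = τm restricted to K
  set ρ : K →+ F := AddMonoidHom.mk' (fun k : K => τm (k : F))
    (by
      intro a c
      show τm ((a + c : K) : F) = τm (a : F) + τm (c : F)
      push_cast
      exact map_add τm _ _) with hρ
  have hρapp : ∀ k : K, ρ k = τm (k : F) := fun k => rfl
  have hcorr : ∀ t : F, #(Finset.univ.filter (fun k : K => ρ k = t))
      = #(Kfin.filter (fun v => τm v = t)) := by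
    intro t
    apply Finset.card_nbij (i := fun k : K => (k : F))
    · intro k hk
      simp only [Finset.mem_coe, Finset.mem_filter, Finset.mem_univ, true_and] at hk
      simp only [Finset.mem_coe, hKfin, Finset.mem_filter, Finset.mem_univ, true_and]
      exact ⟨(hmemK (k : F)).mp k.2, by rw [← hρapp]; exact hk⟩
    · intro x _ y _ h
      exact Subtype.coe_injective h
    · intro v hv
      simp only [Finset.coe_filter, Set.mem_setOf_eq] at hv
      obtain ⟨hv1, hv2⟩ := hv
      rw [hKfin, Finset.mem_filter] at hv1
      refine ⟨⟨v, (hmemK v).mpr hv1.2⟩, ?_, rfl⟩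
      simp only [Set.mem_setOf_eq, Finset.coe_filter, Finset.mem_univ, true_and]
      rw [hρapp]
      exact hv2
  have hkerρle : #(Finset.univ.filter (fun k : K => ρ k = 0)) ≤ 3 ^ (m - 1) := by
    rw [hcorr 0]
    calc #(Kfin.filter (fun v => τm v = 0))
        ≤ #(Finset.univ.filter (fun x : F => ∑ i ∈ Finset.range m, x ^ 3 ^ i = 0)) := by
          apply Finset.card_le_card
          intro x hx
          simp only [Finset.mem_filter] at hx ⊢
          exact ⟨Finset.mem_univ x, by rw [← hτmapp]; exact hx.2⟩
      _ ≤ 3 ^ (m - 1) := tau_zeros_le m hm0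
  have himρsub : Finset.univ.image ρ ⊆ Finset.univ.filter (fun x : F => x ^ 3 = x) := by
    intro c hc
    obtain ⟨k, -, rfl⟩ := Finset.mem_image.mp hc
    simp only [Finset.mem_filter, Finset.mem_univ, true_and]
    rw [hρapp]
    exact hτmP (k : F) ((hmemK (k : F)).mp k.2)
  have hprodρ : #(Finset.univ.filter (fun k : K => ρ k = 0)) * #(Finset.univ.image ρ)
      = 3 ^ m := by
    rw [ker_card_mul_image_card ρ, hcardK, hr]
  have himρ3 : 3 ≤ #(Finset.univ.image ρ) := by
    have h1 : (3 : ℕ) ^ (m - 1) * 3 = 3 ^ m := by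
      rw [← pow_succ]
      congr 1
      omega
    have h2 : 3 ^ (m - 1) * 3 ≤ 3 ^ (m - 1) * #(Finset.univ.image ρ) := by
      rw [h1, ← hprodρ]
      exact Nat.mul_le_mul_right _ hkerρle
    exact Nat.le_of_mul_le_mul_left h2 (by positivity)
  have himρ : Finset.univ.image ρ = Finset.univ.filter (fun x : F => x ^ 3 = x) := by
    apply Finset.eq_of_subset_of_card_le himρsub
    rw [hPcard]
    exact himρ3
  have himρcard : #(Finset.univ.image ρ) = 3 := by rw [himρ, hPcard]
  have hkerρcard : #(Finset.univ.filter (fun k : K => ρ k = 0)) = 3 ^ (m - 1) := by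
    rw [himρcard] at hprodρ
    have h1 : (3 : ℕ) ^ m = 3 ^ (m - 1) * 3 := by
      rw [← pow_succ]
      congr 1
      omega
    rw [h1] at hprodρ
    exact Nat.eq_of_mul_eq_mul_right (by norm_num) hprodρ
  have htbim : ∃ k₀ : K, ρ k₀ = τd b := by
    have : τd b ∈ Finset.univ.image ρ := by
      rw [himρ]
      simp only [Finset.mem_filter, Finset.mem_univ, true_and]
      exact hcube b
    obtain ⟨k₀, -, hk₀⟩ := Finset.mem_image.mp this
    exact ⟨k₀, hk₀⟩
  obtain ⟨k₀, hk₀⟩ := htbim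
  have houtscard : #(Kfin.filter (fun v => τm v = τd b)) = 3 ^ (m - 1) := by
    rw [← hcorr (τd b), ← hk₀]
    rw [fiber_card_eq_ker_card ρ k₀]
    exact hkerρcard
  -- the element e = δ² of K
  have hemem : δ ^ 2 ∈ K := by
    rw [hmemK]
    rw [← pow_mul, mul_comm, pow_mul, hδr]
    ring
  set ek : K := ⟨δ ^ 2, hemem⟩ with hek
  have hδne : δ ≠ 0 := hδ0
  have hek0 : ek ≠ 0 := by
    intro h
    apply pow_ne_zero 2 hδne
    have := congrArg (fun z : K => (z : F)) h
    simpa [hek] using this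
  have htwo : (2 : F) ≠ 0 := Ring.two_ne_zero hF2
  have heknonsq : ¬ IsSquare ek := by
    rintro ⟨t, ht⟩
    have htK : (t : F) ^ r = (t : F) := (hmemK (t : F)).mp t.2
    have hcoe : δ ^ 2 = (t : F) * (t : F) := by
      have := congrArg (fun z : K => (z : F)) ht
      simpa [hek] using this
    have hfac : (δ - (t : F)) * (δ + (t : F)) = 0 := by linear_combination hcoe
    have hcontra : δ = (t : F) ∨ δ = -(t : F) := by
      rcases mul_eq_zero.mp hfac with h | h
      · exact Or.inl (by linear_combination h)
      · exact Or.inr (by linear_combination h)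
    have hδδ : δ ^ r = δ := by
      rcases hcontra with h | h
      · rw [h, htK]
      · rw [h, hrodd.neg_pow, htK]
    rw [hδr] at hδδ
    apply hδne
    have h2δ : (2 : F) * δ = 0 := by linear_combination -hδδ
    rcases mul_eq_zero.mp h2δ with h | h
    · exact absurd h htwo
    · exact h
  have hχKe : quadraticChar K ek = -1 :=
    (quadraticChar_neg_one_iff_not_isSquare).mpr heknonsq
  have hχKm1 : (quadraticChar K (-1) : ℤ) = (-1) ^ m := by
    rw [quadraticChar_neg_one hKc2, hcardK, hr]
    exact chi4_three_pow m
  have hχKnegek : (quadraticChar K (-ek) : ℤ) = -((-1) ^ m) := by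
    have : (-ek : K) = (-1) * ek := by ring
    rw [this, map_mul, hχKe]
    push_cast
    rw [hχKm1]
    ring
  have h3F : (3 : F) = 0 := by
    have := CharP.cast_eq_zero F 3
    exact_mod_cast this
  -- T-fiber over v ∈ K
  have hTik : ∀ v k : F, v ^ r = v → k ^ r = k → T (-v + δ * k) = v := by
    intro v k hvK hkK
    rw [hTapp, haddr, hrodd.neg_pow, mul_pow, hδr, hvK, hkK]
    linear_combination (-v) * h3F
  have hsumK : ∀ f : F → ℤ, ∑ t : K, f (t : F) = ∑ k ∈ Kfin, f k := by
    intro f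
    apply Finset.sum_nbij (i := fun t : K => (t : F))
    · intro t _
      simp only [hKfin, Finset.mem_filter, Finset.mem_univ, true_and]
      exact (hmemK (t : F)).mp t.2
    · intro x _ y _ h
      exact Subtype.coe_injective h
    · intro v hv
      simp only [hKfin, Finset.coe_filter, Set.mem_setOf_eq, Finset.mem_univ, true_and] at hv
      exact ⟨⟨v, (hmemK v).mpr hv⟩, Finset.mem_coe.mpr (Finset.mem_univ _), rfl⟩
    · intro t _
      rfl
  have hinner : ∀ v : F, v ^ r = v → v ≠ 0 →
      ∑ u ∈ Finset.univ.filter (fun u : F => T u = v), (quadraticChar F u : ℤ)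
        = (-1) ^ m := by
    intro v hvK hv0
    have hvk : v ∈ K := (hmemK v).mpr hvK
    -- reindex the fiber by K
    have hstep1 : ∑ u ∈ Finset.univ.filter (fun u : F => T u = v), (quadraticChar F u : ℤ)
        = ∑ k ∈ Kfin, (quadraticChar F (-v + δ * k) : ℤ) := by
      symm
      apply Finset.sum_nbij' (i := fun k => -v + δ * k) (j := fun u => δ⁻¹ * (u + v))
      · intro k hk
        simp only [hKfin, Finset.mem_filter, Finset.mem_univ, true_and] at hk ⊢
        exact hTik v k hvK hk
      · intro u hu
        simp only [hKfin, Finset.mem_filter, Finset.mem_univ, true_and] at hu ⊢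
        have hur : u + u ^ r = v := hu
        have h5 : (u + v) ^ r = -(u + v) := by
          rw [haddr, hvK]
          linear_combination hur + v * h3F
        rw [mul_pow, inv_pow, hδr, h5]
        field_simp
      · intro k hk
        field_simp
        ring
      · intro u hu
        simp only [hKfin, Finset.mem_filter, Finset.mem_univ, true_and] at hu
        field_simp
        ring
      · intro k hk
        rfl
    rw [hstep1, ← hsumK (fun k => (quadraticChar F (-v + δ * k) : ℤ))]
    -- pointwise bridge to K
    have hstep2 : ∀ t : K, (quadraticChar F (-v + δ * (t : F)) : ℤ)
        = (quadraticChar K (-ek * t ^ 2 + (⟨v, hvk⟩ : K) ^ 2) : ℤ) := by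
      intro t
      have htK : (t : F) ^ r = (t : F) := (hmemK (t : F)).mp t.2
      have hu0 : -v + δ * (t : F) ≠ 0 := by
        intro h
        apply hv0
        rw [← hTik v (t : F) hvK htK, h, hTapp, zero_pow (by omega : r ≠ 0)]
        ring
      have hpowr : (-v + δ * (t : F)) ^ r = -v - δ * (t : F) := by
        rw [haddr, hrodd.neg_pow, mul_pow, hδr, hvK, htK]
        ring
      have hn : ((-ek * t ^ 2 + (⟨v, hvk⟩ : K) ^ 2 : K) : F)
          = (-v + δ * (t : F)) ^ (r + 1) := by
        push_cast
        rw [pow_succ (-v + δ * (t : F)) r, hpowr]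
        ring
      exact bridge K hF2 hKc2 r hr1 (by rw [hF, hqr]; ring) hrodd hcardK _ hu0 _ hn
    rw [Finset.sum_congr rfl (fun t _ => hstep2 t)]
    have hvkne : (⟨v, hvk⟩ : K) ^ 2 ≠ 0 := by
      apply pow_ne_zero
      intro h
      apply hv0
      have := congrArg (fun z : K => (z : F)) h
      simpa using this
    rw [sum_quad_shift hKc2 (neg_ne_zero.mpr hek0) hvkne, hχKnegek]
    ring
  -- group the main character sum over fibers of T
  have hτm0 : τm 0 = 0 := map_zero τm
  have hSgroup : ∑ u ∈ Finset.univ.filter (fun u : F => τd u = τd b), (quadraticChar F u : ℤ)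
      = 3 ^ (m - 1) * (-1) ^ m := by
    have hmaps : ∀ u ∈ Finset.univ.filter (fun u : F => τd u = τd b),
        T u ∈ Kfin.filter (fun v => τm v = τd b) := by
      intro u hu
      simp only [Finset.mem_filter, Finset.mem_univ, true_and] at hu ⊢
      constructor
      · rw [← himT]
        exact Finset.mem_image_of_mem _ (Finset.mem_univ u)
      · rw [← htower u]
        exact hu
    rw [← Finset.sum_fiberwise_of_maps_to hmaps (fun u => (quadraticChar F u : ℤ))]
    have hinnerall : ∀ v ∈ Kfin.filter (fun v => τm v = τd b),
        ∑ u ∈ (Finset.univ.filter (fun u : F => τd u = τd b)).filter (fun u => T u = v),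
          (quadraticChar F u : ℤ) = (-1) ^ m := by
      intro v hv
      simp only [hKfin, Finset.mem_filter, Finset.mem_univ, true_and] at hv
      obtain ⟨hv1, hv2⟩ := hv
      have hv0 : v ≠ 0 := by
        intro h
        rw [h, hτm0] at hv2
        exact hτb hv2.symm
      have hfeq : (Finset.univ.filter (fun u : F => τd u = τd b)).filter (fun u => T u = v)
          = Finset.univ.filter (fun u : F => T u = v) := by
        ext u
        simp only [Finset.mem_filter, Finset.mem_univ, true_and]
        constructor
        · exact fun h => h.2
        · intro h
          refine ⟨?_, h⟩
          rw [htower u, h, hv2]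
      rw [hfeq]
      exact hinner v hv1 hv0
    rw [Finset.sum_congr rfl hinnerall, Finset.sum_const, houtscard]
    push_cast
    ring
  -- translate from the image of AS
  have hshiftb : ∑ c ∈ Finset.univ.image AS, (quadraticChar F (c + b) : ℤ)
      = ∑ u ∈ Finset.univ.filter (fun u : F => τd u = τd b), (quadraticChar F u : ℤ) := by
    apply Finset.sum_nbij' (i := fun c => c + b) (j := fun u => u - b)
    · intro c hc
      rw [himAS] at hc
      simp only [Finset.mem_filter, Finset.mem_univ, true_and] at hc ⊢
      rw [map_add, hc, zero_add]
    · intro u hu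
      simp only [Finset.mem_filter, Finset.mem_univ, true_and] at hu
      rw [himAS]
      simp only [Finset.mem_filter, Finset.mem_univ, true_and]
      rw [map_sub, hu, sub_self]
    · intro c _
      ring
    · intro u _
      ring
    · intro c _
      rfl
  have hcomp : ∑ x : F, (quadraticChar F (AS x + b) : ℤ)
      = 3 * ∑ c ∈ Finset.univ.image AS, (quadraticChar F (c + b) : ℤ) := by
    have := sum_comp_hom AS (fun c => (quadraticChar F (c + b) : ℤ))
    rw [this, hkerAScard]
    norm_num
  -- the point count
  have hsqcount : ∀ c : F, ((#(Finset.univ.filter fun y : F => y ^ 2 = c) : ℤ))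
      = quadraticChar F c + 1 := by
    intro c
    rw [← quadraticChar_card_sqrts hF2 c]
    congr 1
    apply Finset.card_nbij (i := id)
    · intro y hy
      simp only [Finset.mem_coe, Finset.mem_filter, Finset.mem_univ, true_and] at hy
      simp [hy]
    · intro x _ y _ h
      exact h
    · intro y hy
      simp only [Set.coe_toFinset, Set.mem_setOf_eq] at hy
      exact ⟨y, by simp [hy], rfl⟩
  have hN : (Nat.card {p : F × F // p.2 ^ 2 = p.1 ^ 3 - p.1 + b} : ℤ)
      = (q : ℤ) + ∑ x : F, (quadraticChar F (AS x + b) : ℤ) := by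
    have hfib := Finset.card_eq_sum_card_fiberwise
      (f := Prod.fst) (s := Finset.univ.filter (fun p : F × F => p.2 ^ 2 = p.1 ^ 3 - p.1 + b))
      (t := Finset.univ) (fun x _ => Finset.mem_univ _)
    have hfibx : ∀ x : F,
        #((Finset.univ.filter (fun p : F × F => p.2 ^ 2 = p.1 ^ 3 - p.1 + b)).filter
          (fun p => p.1 = x))
        = #(Finset.univ.filter fun y : F => y ^ 2 = x ^ 3 - x + b) := by
      intro x
      apply Finset.card_nbij (i := Prod.snd)
      · intro p hp
        simp only [Finset.mem_coe, Finset.mem_filter, Finset.mem_univ, true_and] at hp ⊢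
        obtain ⟨h1, h2⟩ := hp
        rw [← h2]
        exact h1
      · intro p hp p' hp' h
        simp only [Finset.coe_filter, Set.mem_setOf_eq] at hp hp'
        exact Prod.ext (hp.2.trans hp'.2.symm) h
      · intro y hy
        simp only [Finset.coe_filter, Set.mem_setOf_eq, Finset.mem_univ, true_and] at hy
        exact ⟨(x, y), by simp [hy], rfl⟩
    have hcount : #(Finset.univ.filter (fun p : F × F => p.2 ^ 2 = p.1 ^ 3 - p.1 + b))
        = ∑ x : F, #(Finset.univ.filter fun y : F => y ^ 2 = x ^ 3 - x + b) := by
      rw [hfib]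
      exact Finset.sum_congr rfl (fun x _ => hfibx x)
    calc (Nat.card {p : F × F // p.2 ^ 2 = p.1 ^ 3 - p.1 + b} : ℤ)
        = ∑ x : F, ((#(Finset.univ.filter fun y : F => y ^ 2 = x ^ 3 - x + b) : ℤ)) := by
          rw [Nat.card_eq_fintype_card, Fintype.card_subtype, hcount]
          push_cast
          rfl
      _ = ∑ x : F, ((quadraticChar F (AS x + b) : ℤ) + 1) := by
          refine Finset.sum_congr rfl fun x _ => ?_
          rw [hsqcount, hASapp]
      _ = (q : ℤ) + ∑ x : F, (quadraticChar F (AS x + b) : ℤ) := by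
          rw [Finset.sum_add_distrib, Finset.sum_const, Finset.card_univ, hF]
          rw [hq]
          push_cast
          ring
  -- final arithmetic
  have hd2 : d / 2 = m := by omega
  rw [hN, hcomp, hshiftb, hSgroup, hd2]
  have hpowm : (3 : ℤ) * (3 ^ (m - 1) * (-1) ^ m) = (-1) ^ m * 3 ^ m := by
    have h1 : (3 : ℤ) * 3 ^ (m - 1) = 3 ^ m := by
      rw [← pow_succ']
      congr 1
      omega
    calc (3 : ℤ) * (3 ^ (m - 1) * (-1) ^ m) = (3 * 3 ^ (m - 1)) * (-1) ^ m := by ring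
      _ = (-1) ^ m * 3 ^ m := by rw [h1]; ring
  rw [hpowm, hq]
  push_cast
  ring
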